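/- An irreducible cubic hypersurface X ⊂ P^{n+1} over a perfect field k which has a k-point also has a smooth k-point, provided X is not a cone and n ≥ 2. -/

import Mathlib

set_option linter.unusedSectionVars false
set_option maxHeartbeats 1000000

open MvPolynomial Finset

namespace CubicSmoothAux

variable {R : Type*} [CommRing R] {σ : Type*} [Fintype σ] [DecidableEq σ]

lemma sum_delta (w : σ → R) (a : σ) (B : R) :
    (∑ r, w r * if a = r then B else 0) = w a * B := by
  simp [mul_ite, Finset.sum_ite_eq]

/-- Reduction of additive statements about homogeneous polynomials to monomials. -/
lemma reduce (n : ℕ) (P : MvPolynomial σ R → Prop)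
    (hadd : ∀ p q, P p → P q → P (p + q)) (h0 : P 0)
    (hmono : ∀ (d : σ →₀ ℕ) (c : R), d.degree = n → P (monomial d c))
    {f : MvPolynomial σ R} (hf : f.IsHomogeneous n) : P f := by
  have : f = ∑ d ∈ f.support, monomial d (coeff d f) := f.as_sum
  rw [this]
  refine Finset.sum_induction _ P hadd h0 ?_
  intro d hd
  refine hmono _ _ ?_
  by_contra hne
  exact (MvPolynomial.mem_support_iff.mp hd) (hf.coeff_eq_zero hne)

lemma degree_three_structure (d : σ →₀ ℕ) (hd : d.degree = 3) :
    ∃ a b e : σ, d = Finsupp.single a 1 + Finsupp.single b 1 + Finsupp.single e 1 := by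
  have hcard : Multiset.card (Finsupp.toMultiset d) = 3 := by
    rw [Finsupp.card_toMultiset]
    simpa [Finsupp.degree_apply, Finsupp.sum] using hd
  obtain ⟨a, b, e, habe⟩ := Multiset.card_eq_three.mp hcard
  refine ⟨a, b, e, ?_⟩
  have h2 := congrArg Multiset.toFinsupp habe
  rw [Finsupp.toMultiset_toFinsupp] at h2
  rw [h2]
  have h3 : ({a, b, e} : Multiset σ) = {a} + ({b} + {e}) := rfl
  rw [h3, Multiset.toFinsupp_add, Multiset.toFinsupp_add]
  simp [Multiset.toFinsupp_singleton, add_assoc]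

lemma degree_two_structure (d : σ →₀ ℕ) (hd : d.degree = 2) :
    ∃ a b : σ, d = Finsupp.single a 1 + Finsupp.single b 1 := by
  have hcard : Multiset.card (Finsupp.toMultiset d) = 2 := by
    rw [Finsupp.card_toMultiset]
    simpa [Finsupp.degree_apply, Finsupp.sum] using hd
  obtain ⟨a, b, hab⟩ := Multiset.card_eq_two.mp hcard
  refine ⟨a, b, ?_⟩
  have h2 := congrArg Multiset.toFinsupp hab
  rw [Finsupp.toMultiset_toFinsupp] at h2
  rw [h2]
  have h3 : ({a, b} : Multiset σ) = {a} + {b} := rfl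
  rw [h3, Multiset.toFinsupp_add]
  simp [Multiset.toFinsupp_singleton]

lemma monomial3_eq (a b e : σ) (c : R) :
    monomial (Finsupp.single a 1 + Finsupp.single b 1 + Finsupp.single e 1) c
      = C c * X a * X b * X e := by
  simp only [C_apply, MvPolynomial.X, monomial_mul, zero_add, mul_one]

lemma monomial2_eq (a b : σ) (c : R) :
    monomial (Finsupp.single a 1 + Finsupp.single b 1) c = C c * X a * X b := by
  simp only [C_apply, MvPolynomial.X, monomial_mul, zero_add, mul_one]

lemma eval_pd3 (c : R) (a b e r : σ) (x : σ → R) :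
    eval x (pderiv r (C c * X a * X b * X e)) =
      (if a = r then c * (x b * x e) else 0) + (if b = r then c * (x a * x e) else 0)
        + (if e = r then c * (x a * x b) else 0) := by
  simp only [pderiv_mul, pderiv_C_mul, pderiv_C, pderiv_X, Pi.single_apply, map_add, map_mul,
    eval_C, eval_X, map_one, map_zero]
  split_ifs <;> simp only [map_one, map_zero] <;> ring

lemma eval_pd2 (c : R) (a b r : σ) (x : σ → R) :
    eval x (pderiv r (C c * X a * X b)) =
      (if a = r then c * x b else 0) + (if b = r then c * x a else 0) := by
  simp only [pderiv_mul, pderiv_C_mul, pderiv_C, pderiv_X, Pi.single_apply, map_add, map_mul,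
    eval_C, eval_X, map_one, map_zero]
  split_ifs <;> simp only [map_one, map_zero] <;> ring

/-! ### Identities for homogeneous cubics -/

variable {f g h : MvPolynomial σ R}

lemma expand3 (hf : f.IsHomogeneous 3) (x w : σ → R) :
    eval (x + w) f = eval x f + (∑ i, w i * eval x (pderiv i f))
      + (∑ i, x i * eval w (pderiv i f)) + eval w f := by
  refine reduce 3 (fun f => eval (x + w) f = eval x f + (∑ i, w i * eval x (pderiv i f))
      + (∑ i, x i * eval w (pderiv i f)) + eval w f) ?_ (by simp) ?_ hf
  · intro p q hp hq
    simp only [map_add, mul_add, Finset.sum_add_distrib] at *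
    rw [hp, hq]
    try ring
  · intro d c hd
    obtain ⟨a, b, e, rfl⟩ := degree_three_structure d hd
    rw [monomial3_eq]
    simp only [eval_pd3, map_mul, eval_C, eval_X, Pi.add_apply, mul_add, Finset.sum_add_distrib,
      sum_delta]
    ring

lemma euler3 (hf : f.IsHomogeneous 3) (x : σ → R) :
    (∑ i, x i * eval x (pderiv i f)) = 3 * eval x f := by
  refine reduce 3 (fun f => (∑ i, x i * eval x (pderiv i f)) = 3 * eval x f) ?_ (by simp) ?_ hf
  · intro p q hp hq
    simp only [map_add, mul_add, Finset.sum_add_distrib] at *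
    rw [hp, hq]
    try ring
  · intro d c hd
    obtain ⟨a, b, e, rfl⟩ := degree_three_structure d hd
    rw [monomial3_eq]
    simp only [eval_pd3, map_mul, eval_C, eval_X, mul_add, Finset.sum_add_distrib, sum_delta]
    ring

lemma scale3 (hf : f.IsHomogeneous 3) (a : R) (x : σ → R) :
    eval (a • x) f = a ^ 3 * eval x f := by
  refine reduce 3 (fun f => eval (a • x) f = a ^ 3 * eval x f) ?_ (by simp) ?_ hf
  · intro p q hp hq
    rw [map_add, map_add, hp, hq, mul_add]
  · intro d c hd
    obtain ⟨a', b, e, rfl⟩ := degree_three_structure d hd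
    rw [monomial3_eq]
    simp only [map_mul, eval_C, eval_X, Pi.smul_apply, smul_eq_mul]
    ring

lemma expand2 (hg : g.IsHomogeneous 2) (x w : σ → R) :
    eval (x + w) g = eval x g + (∑ i, w i * eval x (pderiv i g)) + eval w g := by
  refine reduce 2 (fun g => eval (x + w) g
      = eval x g + (∑ i, w i * eval x (pderiv i g)) + eval w g) ?_ (by simp) ?_ hg
  · intro p q hp hq
    simp only [map_add, mul_add, Finset.sum_add_distrib] at *
    rw [hp, hq]
    try ring
  · intro d c hd
    obtain ⟨a, b, rfl⟩ := degree_two_structure d hd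
    rw [monomial2_eq]
    simp only [eval_pd2, map_mul, eval_C, eval_X, Pi.add_apply, mul_add, Finset.sum_add_distrib,
      sum_delta]
    ring

lemma euler2 (hg : g.IsHomogeneous 2) (x : σ → R) :
    (∑ i, x i * eval x (pderiv i g)) = 2 * eval x g := by
  refine reduce 2 (fun g => (∑ i, x i * eval x (pderiv i g)) = 2 * eval x g) ?_ (by simp) ?_ hg
  · intro p q hp hq
    simp only [map_add, mul_add, Finset.sum_add_distrib] at *
    rw [hp, hq]
    try ring
  · intro d c hd
    obtain ⟨a, b, rfl⟩ := degree_two_structure d hd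
    rw [monomial2_eq]
    simp only [eval_pd2, map_mul, eval_C, eval_X, mul_add, Finset.sum_add_distrib, sum_delta]
    ring

lemma scale2 (hg : g.IsHomogeneous 2) (a : R) (x : σ → R) :
    eval (a • x) g = a ^ 2 * eval x g := by
  refine reduce 2 (fun g => eval (a • x) g = a ^ 2 * eval x g) ?_ (by simp) ?_ hg
  · intro p q hp hq
    rw [map_add, map_add, hp, hq, mul_add]
  · intro d c hd
    obtain ⟨a', b, rfl⟩ := degree_two_structure d hd
    rw [monomial2_eq]
    simp only [map_mul, eval_C, eval_X, Pi.smul_apply, smul_eq_mul]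
    ring

lemma degree_eq_sum_univ (d : σ →₀ ℕ) : d.degree = ∑ i, d i := by
  rw [Finsupp.degree]
  refine Finset.sum_subset (Finset.subset_univ _) ?_
  intro i _ hi
  simpa using Finsupp.notMem_support_iff.mp hi

lemma pderiv_isHomogeneous {n : ℕ} (hf : f.IsHomogeneous (n + 1)) (i : σ) :
    (pderiv i f).IsHomogeneous n := by
  refine reduce (n + 1) (fun f => (pderiv i f).IsHomogeneous n) ?_
    (by simpa using isHomogeneous_zero σ R n) ?_ hf
  · intro p q hp hq
    rw [map_add]; exact hp.add hq
  · intro d c hd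
    rw [pderiv_monomial]
    rcases Nat.eq_zero_or_pos (d i) with h0 | hpos
    · simp only [h0, Nat.cast_zero, mul_zero, monomial_zero]
      exact isHomogeneous_zero _ _ _
    · refine isHomogeneous_monomial _ ?_
      have hle : Finsupp.single i 1 ≤ d := Finsupp.single_le_iff.mpr hpos
      have hadd : (d - Finsupp.single i 1) + Finsupp.single i 1 = d :=
        tsub_add_cancel_of_le hle
      have hdeg := congrArg Finsupp.degree hadd
      rw [degree_eq_sum_univ, degree_eq_sum_univ d] at hdeg
      simp only [Finsupp.add_apply, Finset.sum_add_distrib, Finsupp.single_apply,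
        Finset.sum_ite_eq, Finset.mem_univ, if_true] at hdeg
      rw [degree_eq_sum_univ] at hd
      rw [degree_eq_sum_univ]
      omega

lemma pderiv_comm' (i j : σ) (f : MvPolynomial σ R) :
    pderiv i (pderiv j f) = pderiv j (pderiv i f) := by
  induction f using MvPolynomial.induction_on' with
  | add p q hp hq => simp [map_add, hp, hq]
  | monomial d c =>
    rcases eq_or_ne i j with rfl | hij
    · rfl
    · simp only [pderiv_monomial]
      congr 1
      · rw [tsub_tsub, tsub_tsub, add_comm]
      · have h1 : ((d - Finsupp.single j 1 : σ →₀ ℕ)) i = d i := by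
          simp [Finsupp.tsub_apply, Finsupp.single_apply, Ne.symm hij]
        have h2 : ((d - Finsupp.single i 1 : σ →₀ ℕ)) j = d j := by
          simp [Finsupp.tsub_apply, Finsupp.single_apply, hij]
        rw [h1, h2]; ring

lemma degree_one_structure (d : σ →₀ ℕ) (hd : d.degree = 1) :
    ∃ a : σ, d = Finsupp.single a 1 := by
  have hcard : Multiset.card (Finsupp.toMultiset d) = 1 := by
    rw [Finsupp.card_toMultiset]
    simpa [Finsupp.degree_apply, Finsupp.sum] using hd
  obtain ⟨a, ha⟩ := Multiset.card_eq_one.mp hcard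
  refine ⟨a, ?_⟩
  have h2 := congrArg Multiset.toFinsupp ha
  rw [Finsupp.toMultiset_toFinsupp] at h2
  rw [h2, Multiset.toFinsupp_singleton]

lemma scale1 (hh : h.IsHomogeneous 1) (a : R) (x : σ → R) :
    eval (a • x) h = a * eval x h := by
  refine reduce 1 (fun h => eval (a • x) h = a * eval x h) ?_ (by simp) ?_ hh
  · intro p q hp hq
    rw [map_add, map_add, hp, hq, mul_add]
  · intro d c hd
    obtain ⟨b, rfl⟩ := degree_one_structure d hd
    have : monomial (Finsupp.single b 1) c = C c * X b := by
      simp only [C_apply, MvPolynomial.X, monomial_mul, zero_add, mul_one]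
    rw [this]
    simp only [map_mul, eval_C, eval_X, Pi.smul_apply, smul_eq_mul]
    ring

section Key

variable {k : Type*} [Field k] {f : MvPolynomial σ k}

/-- The key step: if `p` is a nonzero singular point of the cubic `f`, every point of `k^σ`
is a point of the cubic or a smooth point of it, and `v` is a point where the quadratic
`∑ pᵢ ∂ᵢf` does not vanish, then `v` is itself a singular point of the cubic. -/
lemma key (hf3 : f.IsHomogeneous 3)
    (hns : ∀ x : σ → k, x ≠ 0 → eval x f = 0 → ∀ i, eval x (pderiv i f) = 0)
    {p v : σ → k} (hfp : eval p f = 0) (hgp : ∀ i, eval p (pderiv i f) = 0)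
    (hq : (∑ i, p i * eval v (pderiv i f)) ≠ 0) :
    eval v f = 0 ∧ ∀ i, eval v (pderiv i f) = 0 := by
  have hpd2 : ∀ i, (pderiv i f).IsHomogeneous 2 := fun i => pderiv_isHomogeneous hf3 i
  have hpd1 : ∀ i j, (pderiv j (pderiv i f)).IsHomogeneous 1 :=
    fun i j => pderiv_isHomogeneous (hpd2 i) j
  set q : k := ∑ i, p i * eval v (pderiv i f) with hqdef
  set a : k := eval v f with hadef
  set x : σ → k := a • p + (-q) • v with hxdef
  -- the value of f at x
  have hfx : eval x f = 0 := by
    rw [hxdef, expand3 hf3 (a • p) ((-q) • v)]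
    have t1 : eval (a • p) f = 0 := by rw [scale3 hf3, hfp]; ring
    have t4 : eval ((-q) • v) f = (-q) ^ 3 * a := by rw [scale3 hf3]
    have t2 : (∑ i, ((-q) • v) i * eval (a • p) (pderiv i f)) = 0 :=
      Finset.sum_eq_zero fun i _ => by rw [scale2 (hpd2 i), hgp i]; ring
    have t3 : (∑ i, (a • p) i * eval ((-q) • v) (pderiv i f)) = a * (-q) ^ 2 * q := by
      have hterm : ∀ i, (a • p) i * eval ((-q) • v) (pderiv i f)
          = a * (-q) ^ 2 * (p i * eval v (pderiv i f)) := fun i => by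
        rw [Pi.smul_apply, smul_eq_mul, scale2 (hpd2 i)]; ring
      rw [Finset.sum_congr rfl fun i _ => hterm i, ← Finset.mul_sum]
    rw [t1, t2, t3, t4]; ring
  -- the gradient of f at x
  have grad_x : ∀ i, eval x (pderiv i f)
      = (-q) * a * (∑ j, v j * eval p (pderiv j (pderiv i f)))
        + (-q) ^ 2 * eval v (pderiv i f) := by
    intro i
    rw [hxdef, expand2 (hpd2 i) (a • p) ((-q) • v)]
    have t1 : eval (a • p) (pderiv i f) = 0 := by rw [scale2 (hpd2 i), hgp i]; ring
    have t3 : eval ((-q) • v) (pderiv i f) = (-q) ^ 2 * eval v (pderiv i f) := by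
      rw [scale2 (hpd2 i)]
    have t2 : (∑ j, ((-q) • v) j * eval (a • p) (pderiv j (pderiv i f)))
        = (-q) * a * (∑ j, v j * eval p (pderiv j (pderiv i f))) := by
      have hterm : ∀ j, ((-q) • v) j * eval (a • p) (pderiv j (pderiv i f))
          = (-q) * a * (v j * eval p (pderiv j (pderiv i f))) := fun j => by
        rw [Pi.smul_apply, smul_eq_mul, scale1 (hpd1 i j)]; ring
      rw [Finset.sum_congr rfl fun j _ => hterm j, ← Finset.mul_sum]
    rw [t1, t2, t3]; ring
  -- the contraction of the second-derivative matrix at p with (p, v) vanishes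
  have hS : (∑ i, p i * (∑ j, v j * eval p (pderiv j (pderiv i f)))) = 0 := by
    have h1 : (∑ i, p i * (∑ j, v j * eval p (pderiv j (pderiv i f))))
        = ∑ j, v j * (∑ i, p i * eval p (pderiv i (pderiv j f))) := by
      calc (∑ i, p i * (∑ j, v j * eval p (pderiv j (pderiv i f))))
          = ∑ i, ∑ j, p i * (v j * eval p (pderiv j (pderiv i f))) := by
            simp only [Finset.mul_sum]
        _ = ∑ j, ∑ i, p i * (v j * eval p (pderiv j (pderiv i f))) := Finset.sum_comm
        _ = ∑ j, v j * (∑ i, p i * eval p (pderiv i (pderiv j f))) := by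
            refine Finset.sum_congr rfl fun j _ => ?_
            rw [Finset.mul_sum]
            refine Finset.sum_congr rfl fun i _ => ?_
            rw [pderiv_comm' j i]
            ring
    rw [h1]
    refine Finset.sum_eq_zero fun j _ => ?_
    rw [euler2 (hpd2 j) p, hgp j]
    ring
  -- x is nonzero
  have hx0 : x ≠ 0 := by
    intro h0
    have h1 : ∀ i, eval x (pderiv i f) = 0 := by
      intro i
      have hz : (0 : σ → k) = (0 : k) • (0 : σ → k) := by simp
      rw [h0, hz, scale2 (hpd2 i)]
      ring
    have h3 : (∑ i, p i * eval x (pderiv i f)) = q ^ 3 := by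
      have hterm : ∀ i, p i * eval x (pderiv i f)
          = (-q) * a * (p i * (∑ j, v j * eval p (pderiv j (pderiv i f))))
            + (-q) ^ 2 * (p i * eval v (pderiv i f)) := fun i => by
        rw [grad_x i]; ring
      rw [Finset.sum_congr rfl fun i _ => hterm i, Finset.sum_add_distrib,
        ← Finset.mul_sum, ← Finset.mul_sum, hS, ← hqdef]
      ring
    have h4 : (∑ i, p i * eval x (pderiv i f)) = 0 :=
      Finset.sum_eq_zero fun i _ => by rw [h1 i, mul_zero]
    rw [h4] at h3
    exact hq (pow_eq_zero_iff (n := 3) (by norm_num)|>.mp h3.symm)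
  have hgx : ∀ i, eval x (pderiv i f) = 0 := hns x hx0 hfx
  -- value of f at p + v and gradient there
  have hfpv : eval (p + v) f = q + a := by
    rw [expand3 hf3 p v, hfp]
    have hz : (∑ i, v i * eval p (pderiv i f)) = 0 :=
      Finset.sum_eq_zero fun i _ => by rw [hgp i, mul_zero]
    rw [hz, ← hqdef, ← hadef]
    ring
  have hgpv : ∀ i, eval (p + v) (pderiv i f)
      = (∑ j, v j * eval p (pderiv j (pderiv i f))) + eval v (pderiv i f) := by
    intro i
    rw [expand2 (hpd2 i) p v, hgp i]
    ring
  have hV : (∑ i, p i * eval (p + v) (pderiv i f)) = q := by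
    have hterm : ∀ i, p i * eval (p + v) (pderiv i f)
        = p i * (∑ j, v j * eval p (pderiv j (pderiv i f))) + p i * eval v (pderiv i f) :=
      fun i => by rw [hgpv i]; ring
    rw [Finset.sum_congr rfl fun i _ => hterm i, Finset.sum_add_distrib, hS, ← hqdef]
    ring
  have hU : (∑ i, v i * eval (p + v) (pderiv i f)) = 2 * q + 3 * a := by
    have he := euler3 hf3 (p + v)
    have hsplit : (∑ i, (p i + v i) * eval (p + v) (pderiv i f)) = 3 * (q + a) := by
      rw [← hfpv, ← he]
      exact Finset.sum_congr rfl fun i _ => by rw [Pi.add_apply]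
    have hss : (∑ i, (p i + v i) * eval (p + v) (pderiv i f))
        = (∑ i, p i * eval (p + v) (pderiv i f)) + (∑ i, v i * eval (p + v) (pderiv i f)) := by
      rw [← Finset.sum_add_distrib]
      exact Finset.sum_congr rfl fun i _ => by rw [add_mul]
    rw [hss, hV] at hsplit
    linear_combination hsplit
  have hT : (∑ i, v i * (∑ j, v j * eval p (pderiv j (pderiv i f)))) = 2 * q := by
    have hterm : ∀ i, v i * (∑ j, v j * eval p (pderiv j (pderiv i f)))
        = v i * eval (p + v) (pderiv i f) - v i * eval v (pderiv i f) := fun i => by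
      rw [hgpv i]; ring
    rw [Finset.sum_congr rfl fun i _ => hterm i, Finset.sum_sub_distrib, hU,
      euler3 hf3 v, ← hadef]
    ring
  -- conclude a = 0
  have hcontr : (∑ i, v i * eval x (pderiv i f)) = 0 :=
    Finset.sum_eq_zero fun i _ => by rw [hgx i, mul_zero]
  have hval : (∑ i, v i * eval x (pderiv i f)) = a * q ^ 2 := by
    have hterm : ∀ i, v i * eval x (pderiv i f)
        = (-q) * a * (v i * (∑ j, v j * eval p (pderiv j (pderiv i f))))
          + (-q) ^ 2 * (v i * eval v (pderiv i f)) := fun i => by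
      rw [grad_x i]; ring
    rw [Finset.sum_congr rfl fun i _ => hterm i, Finset.sum_add_distrib,
      ← Finset.mul_sum, ← Finset.mul_sum, hT, euler3 hf3 v, ← hadef]
    ring
  rw [hcontr] at hval
  have hq2 : q ^ 2 ≠ 0 := pow_ne_zero _ hq
  have ha : a = 0 := by
    rcases mul_eq_zero.mp hval.symm with h | h
    · exact h
    · exact absurd h hq2
  refine ⟨ha, fun i => ?_⟩
  have hgi := grad_x i
  rw [hgx i, ha] at hgi
  have h5 : (-q) ^ 2 * eval v (pderiv i f) = 0 := by linear_combination -hgi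
  rcases mul_eq_zero.mp h5 with h | h
  · exact absurd (by linear_combination h) hq2
  · exact h

end Key

section Cone

variable {k K : Type*} [Field k] [Field K]

lemma eval_map_comp (φ : k →+* K) (w : σ → k) (g : MvPolynomial σ k) :
    eval (fun i => φ (w i)) (map φ g) = φ (eval w g) := by
  have h := eval₂_comp_left φ (RingHom.id k) w g
  rw [RingHom.comp_id] at h
  rw [eval_map]
  show eval₂ φ (φ ∘ w) g = φ (eval w g)
  rw [← h]
  rfl

/-- If the quadratic `∑ wᵢ ∂ᵢ f` associated to a singular point `w` of the cubic `f`
vanishes identically, then `w` is a vertex of the cone `f = 0` over any extension. -/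
lemma cone_of_Q_eq_zero (φ : k →+* K) {f : MvPolynomial σ k} (hf3 : f.IsHomogeneous 3)
    {w : σ → k} (hfw : eval w f = 0) (hgw : ∀ i, eval w (pderiv i f) = 0)
    (hQ : (∑ i, C (w i) * pderiv i f) = (0 : MvPolynomial σ k))
    (x : σ → K) (t : K) :
    eval (x + t • fun i => φ (w i)) (map φ f) = eval x (map φ f) := by
  have hF3 : (map φ f).IsHomogeneous 3 := hf3.map φ
  have hFpd2 : ∀ i, (pderiv i (map φ f)).IsHomogeneous 2 := fun i => pderiv_isHomogeneous hF3 i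
  rw [expand3 hF3 x (t • fun i => φ (w i))]
  have t4 : eval (t • fun i => φ (w i)) (map φ f) = 0 := by
    rw [scale3 hF3, eval_map_comp φ w f, hfw, map_zero, mul_zero]
  have t3 : (∑ i, x i * eval (t • fun i => φ (w i)) (pderiv i (map φ f))) = 0 := by
    refine Finset.sum_eq_zero fun i _ => ?_
    rw [scale2 (hFpd2 i), pderiv_map, eval_map_comp φ w, hgw i, map_zero]
    ring
  have t2 : (∑ i, (t • fun i => φ (w i)) i * eval x (pderiv i (map φ f))) = 0 := by
    have hmain : (∑ i, φ (w i) * eval x (pderiv i (map φ f))) = 0 := by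
      have hh : (∑ i, φ (w i) * eval x (pderiv i (map φ f)))
          = eval x (map φ (∑ i, C (w i) * pderiv i f)) := by
        rw [map_sum (map φ), map_sum (eval x)]
        refine Finset.sum_congr rfl fun i _ => ?_
        rw [map_mul, map_C, map_mul, eval_C, pderiv_map]
      rw [hh, hQ, map_zero, map_zero]
    have hterm : ∀ i, (t • fun i => φ (w i)) i * eval x (pderiv i (map φ f))
        = t * (φ (w i) * eval x (pderiv i (map φ f))) := fun i => by
      rw [Pi.smul_apply, smul_eq_mul]; ring
    rw [Finset.sum_congr rfl fun i _ => hterm i, ← Finset.mul_sum, hmain, mul_zero]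
  rw [t2, t3, t4]
  ring

end Cone

end CubicSmoothAux


open CubicSmoothAux



/-- Let `k` be a perfect field and `X ⊂ ℙ^{n+1}` an irreducible cubic hypersurface of
dimension `n ≥ 2` over `k` (defined by an irreducible homogeneous cubic `f` in the
`n + 2` homogeneous coordinates) which is not a cone (over the algebraic closure there
is no vertex point `p ≠ 0` with `f(x + t·p) = f(x)` for all `x, t`).  If `X` has a
`k`-point, then `X` has a smooth `k`-point, i.e. a nonzero `x ∈ k^{n+2}` with
`f(x) = 0` at which some partial derivative of `f` is nonzero. -/
theorem smooth_point_of_point_cubic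
    {k : Type*} [Field k] [PerfectField k] {n : ℕ} (hn : 2 ≤ n)
    (f : MvPolynomial (Fin (n + 2)) k) (hf3 : f.IsHomogeneous 3) (hirr : Irreducible f)
    (hnotcone : ¬ ∃ p : Fin (n + 2) → AlgebraicClosure k, p ≠ 0 ∧
      ∀ (x : Fin (n + 2) → AlgebraicClosure k) (t : AlgebraicClosure k),
        MvPolynomial.eval (x + t • p)
            (MvPolynomial.map (algebraMap k (AlgebraicClosure k)) f) =
          MvPolynomial.eval x (MvPolynomial.map (algebraMap k (AlgebraicClosure k)) f))
    (hpt : ∃ x : Fin (n + 2) → k, x ≠ 0 ∧ MvPolynomial.eval x f = 0) :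
    ∃ x : Fin (n + 2) → k, x ≠ 0 ∧ MvPolynomial.eval x f = 0 ∧
      ∃ i : Fin (n + 2), MvPolynomial.eval x (MvPolynomial.pderiv i f) ≠ 0 := by
  classical
  by_contra hcon
  push_neg at hcon
  -- `hcon : ∀ x ≠ 0, f(x) = 0 → ∇f(x) = 0`, i.e. every k-point of the cubic is singular
  have hQne : ∀ w : Fin (n + 2) → k, w ≠ 0 → eval w f = 0 →
      (∀ i, eval w (pderiv i f) = 0) →
      (∑ i, C (w i) * pderiv i f) ≠ (0 : MvPolynomial (Fin (n + 2)) k) := by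
    intro w hw hfw hgw hQ
    apply hnotcone
    refine ⟨fun i => algebraMap k (AlgebraicClosure k) (w i), ?_, ?_⟩
    · intro h0
      apply hw
      funext i
      have h1 : algebraMap k (AlgebraicClosure k) (w i) = 0 := congrFun h0 i
      exact (map_eq_zero _).mp h1
    · exact cone_of_Q_eq_zero (algebraMap k (AlgebraicClosure k)) hf3 hfw hgw hQ
  have hfind : ∀ w : Fin (n + 2) → k,
      (∑ i, C (w i) * pderiv i f) ≠ (0 : MvPolynomial (Fin (n + 2)) k) →
      ∃ v : Fin (n + 2) → k, (∑ i, w i * eval v (pderiv i f)) ≠ 0 := by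
    intro w hne
    by_contra hall
    push_neg at hall
    apply hne
    have hhom : (∑ i, C (w i) * pderiv i f).IsHomogeneous 2 :=
      MvPolynomial.IsHomogeneous.sum _ _ _ fun i _ =>
        (pderiv_isHomogeneous hf3 i).C_mul (w i)
    refine hhom.eq_zero_of_forall_eval_eq_zero_of_le_card ?_ ?_
    · intro v
      have hv := hall v
      rw [map_sum (eval v)]
      simpa [eval_C] using hv
    · have h2 : (2 : Cardinal) ≤ Cardinal.mk k :=
        Cardinal.two_le_iff.mpr ⟨0, 1, zero_ne_one⟩
      simpa using h2
  have hzero_eval : ∀ i, eval (0 : Fin (n + 2) → k) (pderiv i f) = 0 := by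
    intro i
    have hz : (0 : Fin (n + 2) → k) = (0 : k) • (0 : Fin (n + 2) → k) := by simp
    rw [hz, scale2 (pderiv_isHomogeneous hf3 i)]
    ring
  obtain ⟨p₀, hp0ne, hfp0⟩ := hpt
  have hgp0 : ∀ i, eval p₀ (pderiv i f) = 0 := hcon p₀ hp0ne hfp0
  obtain ⟨v, hv⟩ := hfind p₀ (hQne p₀ hp0ne hfp0 hgp0)
  obtain ⟨hfv, hgv⟩ := key hf3 hcon hfp0 hgp0 hv
  have hvne : v ≠ 0 := by
    intro h0
    apply hv
    refine Finset.sum_eq_zero fun i _ => ?_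
    rw [h0, hzero_eval i, mul_zero]
  obtain ⟨w, hw⟩ := hfind v (hQne v hvne hfv hgv)
  obtain ⟨-, hgw⟩ := key hf3 hcon hfv hgv hw
  exact hw (Finset.sum_eq_zero fun i _ => by rw [hgw i, mul_zero])
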